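/- arXiv:2006.08710 — 3 statements merged into one kernel-verified Lean document; each statement's English description precedes it below -/
import Mathlib

section
/- For every μ ∈ ℝ and σ > 0, the Spherical Log-Normal density f₃ integrates to 1 over ℝ³, i.e. ∫_{ℝ³} f₃(x) dx = 1 with respect to Lebesgue measure, so f₃ is a probability density on ℝ³. -/
open Real MeasureTheory Classical

/-- The Spherical Log-Normal density on ℝ³ with parameters `μ` and `σ`. -/

noncomputable def sphericalLogNormalDensity (μ σ : ℝ) (x : EuclideanSpace ℝ (Fin 3)) : ℝ :=
  if x = 0 then 0
  else (1 / (2 * (2 * π) ^ ((3 : ℝ) / 2) * σ * ‖x‖ ^ 3)) *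
    Real.exp (-(Real.log ‖x‖ - μ) ^ 2 / (2 * σ ^ 2))

lemma gauss_shift (μ σ : ℝ) (hσ : 0 < σ) :
    ∫ t : ℝ, Real.exp (-(t - μ) ^ 2 / (2 * σ ^ 2)) = σ * Real.sqrt (2 * π) := by
  rw [integral_sub_right_eq_self (fun t => Real.exp (-t ^ 2 / (2 * σ ^ 2))) μ]
  have h : ∀ t : ℝ, -t ^ 2 / (2 * σ ^ 2) = -(1 / (2 * σ ^ 2)) * t ^ 2 := by
    intro t; field_simp
  simp_rw [h]
  rw [integral_gaussian]
  rw [show π / (1 / (2 * σ ^ 2)) = σ ^ 2 * (2 * π) by field_simp]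
  rw [Real.sqrt_mul (by positivity), Real.sqrt_sq hσ.le]

/-- For every `μ ∈ ℝ` and `σ > 0`, the Spherical Log-Normal density integrates to `1`
over ℝ³ with respect to Lebesgue measure; i.e. it is a probability density on ℝ³. -/
theorem integral_sphericalLogNormalDensity (μ σ : ℝ) (hσ : 0 < σ) :
    ∫ x : EuclideanSpace ℝ (Fin 3), sphericalLogNormalDensity μ σ x = 1 := by
  set c : ℝ := 1 / (2 * (2 * π) ^ ((3 : ℝ) / 2) * σ) with hc
  set f : ℝ → ℝ := fun r => if r = 0 then 0
    else (1 / (2 * (2 * π) ^ ((3 : ℝ) / 2) * σ * r ^ 3)) *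
      Real.exp (-(Real.log r - μ) ^ 2 / (2 * σ ^ 2)) with hf
  have hdens : ∀ x : EuclideanSpace ℝ (Fin 3), sphericalLogNormalDensity μ σ x = f ‖x‖ := by
    intro x
    simp only [sphericalLogNormalDensity, hf, norm_eq_zero]
  simp_rw [hdens]
  rw [MeasureTheory.integral_fun_norm_addHaar volume f]
  -- radial integral
  have hIoi : Real.exp '' Set.univ = Set.Ioi (0 : ℝ) := by
    rw [Set.image_univ, Real.range_exp]
  have hsub : ∫ y in Set.Ioi (0 : ℝ),
      y ^ (Module.finrank ℝ (EuclideanSpace ℝ (Fin 3)) - 1) • f y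
      = ∫ t : ℝ, c * Real.exp (-(t - μ) ^ 2 / (2 * σ ^ 2)) := by
    rw [← hIoi, integral_image_eq_integral_abs_deriv_smul MeasurableSet.univ
      (fun x _ => (Real.hasDerivAt_exp x).hasDerivWithinAt)
      (Real.exp_injective.injOn) _]
    rw [MeasureTheory.setIntegral_univ]
    refine integral_congr_ae (Filter.Eventually.of_forall fun t => ?_)
    have he : Real.exp t ≠ 0 := (Real.exp_pos t).ne'
    simp only [hf, smul_eq_mul, he, if_neg he, abs_of_pos (Real.exp_pos t),
      Real.log_exp, finrank_euclideanSpace, Fintype.card_fin]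
    rw [hc]
    field_simp
  rw [hsub]
  rw [integral_const_mul, gauss_shift μ σ hσ]
  -- volume of unit ball
  have hball : (volume (Metric.ball (0 : EuclideanSpace ℝ (Fin 3)) 1)).toReal
      = π * (4 / 3) := by
    rw [EuclideanSpace.volume_ball]
    have hΓ : Real.Gamma ((Fintype.card (Fin 3) : ℝ) / 2 + 1) = 3 / 4 * Real.sqrt π := by
      rw [show ((Fintype.card (Fin 3) : ℝ) / 2 + 1) = (1 / 2 + 1) + 1 by
        norm_num [Fintype.card_fin]]
      rw [Real.Gamma_add_one (by norm_num), Real.Gamma_add_one (by norm_num),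
        Real.Gamma_one_half_eq]
      ring
    rw [hΓ, Fintype.card_fin]
    rw [ENNReal.toReal_mul, ENNReal.toReal_pow, ENNReal.toReal_ofReal (by norm_num),
      ENNReal.toReal_ofReal (by positivity)]
    have hπ : (0 : ℝ) < Real.sqrt π := Real.sqrt_pos.2 Real.pi_pos
    rw [one_pow, one_mul]
    rw [show Real.sqrt π ^ 3 = π * Real.sqrt π by
      rw [pow_succ, Real.sq_sqrt Real.pi_pos.le]]
    field_simp
  rw [finrank_euclideanSpace, Fintype.card_fin, Measure.real, hball]
  -- final arithmetic
  have h2π : (0 : ℝ) < 2 * π := by positivity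
  have hpow : (2 * π) ^ ((3 : ℝ) / 2) = (2 * π) * Real.sqrt (2 * π) := by
    rw [show (3 : ℝ) / 2 = 1 + 1 / 2 by norm_num, Real.rpow_add h2π, Real.rpow_one,
      ← Real.sqrt_eq_rpow]
  have hs : (0 : ℝ) < Real.sqrt (2 * π) := Real.sqrt_pos.2 h2π
  rw [nsmul_eq_mul, smul_eq_mul, hc, hpow]
  field_simp
  ring
end

section
/- Fix μ ∈ ℝ and σ > 0, and let P be the probability measure on ℝ³ with density f₃ with respect to Lebesgue measure. Then the pushforward of P under the Euclidean norm map x ↦ ‖x‖ is the measure on ℝ with density f(r) = (1/(r·σ·√(2π))) · exp(−(log r − μ)²/(2σ²)) for r > 0 and f(r) = 0 for r ≤ 0, i.e. the norm of a Spherical Log-Normal sample is Log-Normal(μ, σ²) distributed. -/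
open Real MeasureTheory Classical

/-- The Log-Normal(μ, σ²) density on ℝ: `(1/(r·σ·√(2π)))·exp(−(log r − μ)²/(2σ²))`
for `r > 0` and `0` otherwise. -/
noncomputable def logNormalDensity (μ σ : ℝ) (r : ℝ) : ℝ :=
  if 0 < r then (1 / (r * σ * Real.sqrt (2 * π))) *
    Real.exp (-(Real.log r - μ) ^ 2 / (2 * σ ^ 2))
  else 0

open Set Metric in
lemma lintegral_fun_norm_addHaar' {E : Type*} [NormedAddCommGroup E] [NormedSpace ℝ E]
    [MeasurableSpace E] [BorelSpace E] [Nontrivial E] [FiniteDimensional ℝ E]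
    (μ : Measure E) [μ.IsAddHaarMeasure] (g : ℝ → ENNReal) (hg : Measurable g) :
    ∫⁻ x, g ‖x‖ ∂μ = μ.toSphere univ * ∫⁻ r in Ioi (0 : ℝ),
      ENNReal.ofReal (r ^ (Module.finrank ℝ E - 1)) * g r := by
  calc
    ∫⁻ x, g ‖x‖ ∂μ = ∫⁻ x : ({(0)}ᶜ : Set E), g ‖x.1‖ ∂(μ.comap (↑)) := by
      rw [lintegral_subtype_comap (measurableSet_singleton _).compl fun x ↦ g ‖x‖,
        restrict_compl_singleton]
    _ = ∫⁻ p : sphere (0 : E) 1 × Ioi (0 : ℝ), g p.2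
        ∂μ.toSphere.prod (.volumeIoiPow (Module.finrank ℝ E - 1)) :=
      by simpa [Function.comp_def] using (μ.measurePreserving_homeomorphUnitSphereProd.lintegral_comp
          (hg.comp (measurable_subtype_coe.comp measurable_snd)))
    _ = μ.toSphere univ * ∫⁻ r : Ioi (0 : ℝ), g r ∂(.volumeIoiPow (Module.finrank ℝ E - 1)) := by
      rw [lintegral_prod (fun p : sphere (0 : E) 1 × Ioi (0 : ℝ) => g p.2)
        ((hg.comp (measurable_subtype_coe.comp measurable_snd)).aemeasurable),
]
      simp only []
      rw [lintegral_const]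
      ring
    _ = _ := by
      rw [Measure.volumeIoiPow,
        lintegral_withDensity_eq_lintegral_mul _
          ((measurable_subtype_coe.pow_const _).ennreal_ofReal)
          (g := fun r : Ioi (0:ℝ) => g r.1) (hg.comp measurable_subtype_coe),
]
      simp only [Pi.mul_apply]
      rw [lintegral_subtype_comap measurableSet_Ioi
          (fun r : ℝ => ENNReal.ofReal (r ^ (Module.finrank ℝ E - 1)) * g r)]

lemma vol_ball3 : volume (Metric.ball (0 : EuclideanSpace ℝ (Fin 3)) 1) =
    ENNReal.ofReal (4 * π / 3) := by
  rw [EuclideanSpace.volume_ball]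
  have h12 : Real.Gamma (1 / 2) = √π := Real.Gamma_one_half_eq
  have h32 : Real.Gamma (3 / 2) = √π / 2 := by
    have h := Real.Gamma_add_one (s := 1 / 2) (by norm_num)
    rw [show (1 : ℝ) / 2 + 1 = 3 / 2 by norm_num] at h
    rw [h, h12]; ring
  have h52 : Real.Gamma ((Fintype.card (Fin 3) : ℝ) / 2 + 1) = 3 * √π / 4 := by
    rw [show ((Fintype.card (Fin 3) : ℝ)) / 2 + 1 = 3 / 2 + 1 by norm_num]
    rw [Real.Gamma_add_one (by norm_num), h32]; ring
  rw [h52]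
  have hπ : (0 : ℝ) < π := Real.pi_pos
  have hs : (0 : ℝ) < √π := Real.sqrt_pos.mpr hπ
  have hsq : √π * √π = π := Real.mul_self_sqrt hπ.le
  simp only [Fintype.card_fin, ENNReal.ofReal_one, one_pow, one_mul]
  congr 1
  field_simp
  nlinarith [hsq, hs]


/-- Radial profile of the spherical log-normal density. -/
noncomputable def radialProf (μ σ : ℝ) (r : ℝ) : ℝ :=
  if 0 < r then (1 / (2 * (2 * π) ^ ((3 : ℝ) / 2) * σ * r ^ 3)) *
    Real.exp (-(Real.log r - μ) ^ 2 / (2 * σ ^ 2))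
  else 0

lemma radialProf_nonneg (μ σ r : ℝ) (hσ : 0 < σ) : 0 ≤ radialProf μ σ r := by
  rw [radialProf]
  split_ifs with h
  · have : (0:ℝ) < (2 * π) ^ ((3 : ℝ) / 2) := Real.rpow_pos_of_pos (by positivity) _
    positivity
  · exact le_refl 0

lemma measurable_radialProf (μ σ : ℝ) : Measurable (radialProf μ σ) := by
  apply Measurable.ite measurableSet_Ioi ?_ measurable_const
  exact ((measurable_const.div (by fun_prop)).mul
    ((((Real.measurable_log.sub measurable_const).pow_const 2).neg.div_const _).exp))

lemma key_alg (μ σ r : ℝ) (hσ : 0 < σ) (hr : 0 < r) :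
    4 * π * (r ^ 2 * radialProf μ σ r) = logNormalDensity μ σ r := by
  rw [radialProf, logNormalDensity, if_pos hr, if_pos hr]
  have h32 : ((3 : ℝ) / 2) = 1 + 1 / 2 := by norm_num
  rw [h32, Real.rpow_add (by positivity), Real.rpow_one, ← Real.sqrt_eq_rpow]
  have hs2 : (0:ℝ) < Real.sqrt (2 * π) := Real.sqrt_pos.mpr (by positivity)
  field_simp
  ring

/-- The norm of a Spherical Log-Normal sample is Log-Normal(μ, σ²) distributed:
the pushforward under `x ↦ ‖x‖` of the measure with density `f₃` is the measure
on ℝ with the Log-Normal(μ, σ²) density. -/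
theorem map_norm_sphericalLogNormal_eq_logNormal (μ σ : ℝ) (hσ : 0 < σ) :
    Measure.map (fun x : EuclideanSpace ℝ (Fin 3) => ‖x‖)
        (volume.withDensity fun x => ENNReal.ofReal (sphericalLogNormalDensity μ σ x)) =
      volume.withDensity fun r => ENNReal.ofReal (logNormalDensity μ σ r) := by
  have hmnorm : Measurable (fun x : EuclideanSpace ℝ (Fin 3) => ‖x‖) := measurable_norm
  have hdens : ∀ x : EuclideanSpace ℝ (Fin 3),
      sphericalLogNormalDensity μ σ x = radialProf μ σ ‖x‖ := by
    intro x
    by_cases hx : x = 0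
    · simp [sphericalLogNormalDensity, radialProf, hx]
    · rw [sphericalLogNormalDensity, radialProf, if_neg hx, if_pos (norm_pos_iff.mpr hx)]
  ext s hs
  rw [Measure.map_apply hmnorm hs, withDensity_apply _ (hmnorm hs), withDensity_apply _ hs,
    ← lintegral_indicator (hmnorm hs) _, ← lintegral_indicator hs _]
  set G : ℝ → ENNReal := fun r => s.indicator (fun r => ENNReal.ofReal (radialProf μ σ r)) r
    with hGdef
  have hGmeas : Measurable G :=
    ((measurable_radialProf μ σ).ennreal_ofReal).indicator hs
  have key : ∀ x : EuclideanSpace ℝ (Fin 3),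
      ((fun x : EuclideanSpace ℝ (Fin 3) => ‖x‖) ⁻¹' s).indicator
        (fun x => ENNReal.ofReal (sphericalLogNormalDensity μ σ x)) x = G ‖x‖ := by
    intro x
    simp only [hGdef]
    by_cases hx : ‖x‖ ∈ s
    · rw [Set.indicator_of_mem (Set.mem_preimage.mpr hx), Set.indicator_of_mem hx, hdens]
    · rw [Set.indicator_of_notMem (fun h => hx (Set.mem_preimage.mp h)),
        Set.indicator_of_notMem hx]
  rw [lintegral_congr key, lintegral_fun_norm_addHaar' volume G hGmeas,
    Measure.toSphere_apply_univ, finrank_euclideanSpace_fin, vol_ball3]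
  have hc : ((3 : ℕ) : ENNReal) * ENNReal.ofReal (4 * π / 3) = ENNReal.ofReal (4 * π) := by
    rw [show ((3 : ℕ) : ENNReal) = ENNReal.ofReal (3 : ℝ) by simp,
      ← ENNReal.ofReal_mul (by norm_num)]
    congr 1
    ring
  rw [hc, ← lintegral_const_mul' _ _ ENNReal.ofReal_ne_top]
  -- now compare the two set-lintegrals
  have hln0 : ∀ r : ℝ, r ∉ Set.Ioi (0 : ℝ) → ENNReal.ofReal (logNormalDensity μ σ r) = 0 := by
    intro r hr
    rw [logNormalDensity, if_neg (by simpa using hr)]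
    simp
  have hrhs : ∫⁻ r, s.indicator (fun r => ENNReal.ofReal (logNormalDensity μ σ r)) r
      = ∫⁻ r in Set.Ioi (0 : ℝ),
        s.indicator (fun r => ENNReal.ofReal (logNormalDensity μ σ r)) r := by
    rw [← lintegral_indicator measurableSet_Ioi _, Set.indicator_indicator]
    apply lintegral_congr
    intro r
    by_cases h1 : r ∈ Set.Ioi (0 : ℝ) ∩ s
    · rw [Set.indicator_of_mem h1, Set.indicator_of_mem h1.2]
    · rw [Set.indicator_of_notMem h1]
      by_cases h2 : r ∈ s
      · rw [Set.indicator_of_mem h2, hln0 r (fun hr => h1 ⟨hr, h2⟩)]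
      · rw [Set.indicator_of_notMem h2]
  rw [hrhs]
  apply setLIntegral_congr_fun measurableSet_Ioi
  intro r hr
  by_cases hrs : r ∈ s
  · rw [hGdef]
    simp only [Set.indicator_of_mem hrs]
    rw [← ENNReal.ofReal_mul (p := r ^ 2) (by positivity),
      ← ENNReal.ofReal_mul (p := 4 * π) (by positivity)]
    congr 1
    rw [← key_alg μ σ r hσ hr]
  · simp [hGdef, Set.indicator_of_notMem hrs]
end

section
/- Fix μ ∈ ℝ and σ > 0, and let P be the probability measure on ℝ³ with density f₃ with respect to Lebesgue measure. Then the pushforward of P under the map x ↦ x/‖x‖ (defined P-almost everywhere since P({0}) = 0) is the uniform probability measure on the unit sphere of ℝ³, i.e. the normalized surface measure on {x ∈ ℝ³ : ‖x‖ = 1}. -/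
open Real MeasureTheory Classical

/-- The uniform probability measure on the unit sphere of ℝ³: the surface
(spherical) measure on `{x : ‖x‖ = 1}`, normalized to total mass 1. -/
noncomputable def uniformSphereMeasure :
    Measure (Metric.sphere (0 : EuclideanSpace ℝ (Fin 3)) 1) :=
  ((volume : Measure (EuclideanSpace ℝ (Fin 3))).toSphere Set.univ)⁻¹ •
    (volume : Measure (EuclideanSpace ℝ (Fin 3))).toSphere

section Aux
open Set
open scoped ENNReal

noncomputable def SLNaux.rho (μ σ r : ℝ) : ℝ :=
  (1 / (2 * (2 * π) ^ ((3 : ℝ) / 2) * σ * r ^ 3)) * Real.exp (-(Real.log r - μ) ^ 2 / (2 * σ ^ 2))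

namespace SLNaux

lemma rho_measurable (μ σ : ℝ) : Measurable (rho μ σ) := by
  unfold rho
  measurability

lemma rho_nonneg (μ σ : ℝ) (hσ : 0 < σ) {r : ℝ} (hr : 0 < r) : 0 ≤ rho μ σ r := by
  unfold rho
  have h1 : (0:ℝ) < (2 * π) ^ ((3 : ℝ) / 2) := rpow_pos_of_pos (by positivity) _
  positivity

lemma gauss_rw (μ σ : ℝ) (t : ℝ) :
    Real.exp (-(t - μ) ^ 2 / (2 * σ ^ 2)) = Real.exp (-(2 * σ ^ 2)⁻¹ * (t - μ) ^ 2) := by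
  congr 1; ring

lemma subst_eq (μ σ : ℝ) (hσ : 0 < σ) (t : ℝ) :
    |Real.exp t| • (Real.exp t ^ 2 * rho μ σ (Real.exp t)) =
      (2 * (2 * π) ^ ((3 : ℝ) / 2) * σ)⁻¹ * Real.exp (-(2 * σ ^ 2)⁻¹ * (t - μ) ^ 2) := by
  have h1 : (0:ℝ) < (2 * π) ^ ((3 : ℝ) / 2) := rpow_pos_of_pos (by positivity) _
  have h2 : (0:ℝ) < Real.exp t := exp_pos t
  rw [abs_of_pos h2, smul_eq_mul, rho, Real.log_exp, ← gauss_rw μ σ]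
  field_simp

lemma image_exp : Real.exp '' univ = Ioi (0:ℝ) := by
  rw [image_univ, Real.range_exp]

lemma deriv_exp' : ∀ x ∈ (univ : Set ℝ), HasDerivWithinAt Real.exp (Real.exp x) univ x :=
  fun x _ => (Real.hasDerivAt_exp x).hasDerivWithinAt

lemma gauss_integrable (μ σ : ℝ) (hσ : 0 < σ) :
    Integrable (fun t : ℝ => (2 * (2 * π) ^ ((3 : ℝ) / 2) * σ)⁻¹ *
      Real.exp (-(2 * σ ^ 2)⁻¹ * (t - μ) ^ 2)) := by
  have hb : (0:ℝ) < (2 * σ ^ 2)⁻¹ := by positivity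
  exact ((integrable_exp_neg_mul_sq hb).comp_sub_right μ).const_mul _

lemma radial_integrableOn (μ σ : ℝ) (hσ : 0 < σ) :
    IntegrableOn (fun r : ℝ => r ^ 2 * rho μ σ r) (Ioi 0) := by
  rw [← image_exp,
    integrableOn_image_iff_integrableOn_abs_deriv_smul MeasurableSet.univ deriv_exp'
      Real.exp_injective.injOn (fun r => r ^ 2 * rho μ σ r)]
  rw [integrableOn_univ]
  exact (gauss_integrable μ σ hσ).congr (by
    filter_upwards with t using (subst_eq μ σ hσ t).symm)

lemma radial_integral (μ σ : ℝ) (hσ : 0 < σ) :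
    ∫ r in Ioi (0:ℝ), r ^ 2 * rho μ σ r = (4 * π)⁻¹ := by
  rw [← image_exp,
    integral_image_eq_integral_abs_deriv_smul MeasurableSet.univ deriv_exp'
      Real.exp_injective.injOn (fun r => r ^ 2 * rho μ σ r)]
  rw [Measure.restrict_univ]
  have h : ∫ t : ℝ, |Real.exp t| • (Real.exp t ^ 2 * rho μ σ (Real.exp t)) =
      ∫ t : ℝ, (2 * (2 * π) ^ ((3 : ℝ) / 2) * σ)⁻¹ *
        Real.exp (-(2 * σ ^ 2)⁻¹ * (t - μ) ^ 2) := by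
    congr 1; funext t; exact subst_eq μ σ hσ t
  rw [h, integral_const_mul]
  have hb : (0:ℝ) < (2 * σ ^ 2)⁻¹ := by positivity
  rw [show (fun t : ℝ => Real.exp (-(2 * σ ^ 2)⁻¹ * (t - μ) ^ 2)) =
      (fun t : ℝ => Real.exp (-(2 * σ ^ 2)⁻¹ * t ^ 2)) ∘ (fun t => t - μ) from rfl,
    Function.comp_def,
    integral_sub_right_eq_self (μ := volume) (fun t : ℝ => Real.exp (-(2 * σ ^ 2)⁻¹ * t ^ 2)) μ,
    integral_gaussian]
  have hπ : (0:ℝ) < π := pi_pos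
  have hs : √(π / (2 * σ ^ 2)⁻¹) = σ * √(2 * π) := by
    rw [show π / (2 * σ ^ 2)⁻¹ = σ ^ 2 * (2 * π) from by field_simp,
      Real.sqrt_mul (by positivity), Real.sqrt_sq hσ.le]
  rw [hs]
  have h2π : (0:ℝ) < 2 * π := by positivity
  have hsq : √(2 * π) = (2 * π) ^ ((1:ℝ)/2) := by
    rw [Real.sqrt_eq_rpow]
  have key : (2 * π) ^ ((1:ℝ)/2) * (2 * π) = (2 * π) ^ ((3:ℝ)/2) := by
    nth_rewrite 2 [← Real.rpow_one (2 * π)]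
    rw [← Real.rpow_add h2π]; norm_num
  have h32 : (0:ℝ) < (2 * π) ^ ((3:ℝ)/2) := rpow_pos_of_pos h2π _
  rw [hsq]
  field_simp
  rw [← key]; ring

variable {α β : Type*} [MeasurableSpace α] [MeasurableSpace β]

lemma map_withDensity_equiv (e : α ≃ᵐ β) (μ : Measure α) (g : β → ℝ≥0∞) (hg : Measurable g) :
    Measure.map e (μ.withDensity (g ∘ e)) = (Measure.map e μ).withDensity g := by
  ext s hs
  rw [Measure.map_apply e.measurable hs, withDensity_apply _ (e.measurable hs),
    withDensity_apply _ hs, setLIntegral_map hs hg e.measurable]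
  rfl

lemma map_fst_withDensity_snd (μ₁ : Measure α) (μ₂ : Measure β) [SigmaFinite μ₁] [SigmaFinite μ₂]
    (g : β → ℝ≥0∞) (hg : Measurable g) :
    Measure.map Prod.fst ((μ₁.prod μ₂).withDensity (fun p => g p.2)) =
      (∫⁻ y, g y ∂μ₂) • μ₁ := by
  ext s hs
  rw [Measure.map_apply measurable_fst hs,
    withDensity_apply _ (measurable_fst hs), ← Set.prod_univ,
    ← Measure.prod_restrict s univ, Measure.restrict_univ,
    lintegral_prod (fun p => g p.2) (hg.comp measurable_snd).aemeasurable]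
  simp only [lintegral_const, Measure.smul_apply, smul_eq_mul]
  rw [Measure.restrict_apply_univ, mul_comm]

lemma lint_c (μ σ : ℝ) (hσ : 0 < σ) :
    ∫⁻ r : Ioi (0:ℝ), ENNReal.ofReal (rho μ σ r.1) ∂(Measure.volumeIoiPow 2) =
      ENNReal.ofReal (4 * π)⁻¹ := by
  rw [Measure.volumeIoiPow,
    lintegral_withDensity_eq_lintegral_mul _
      (by exact (measurable_subtype_coe.pow_const 2).ennreal_ofReal)
      (g := fun r : Ioi (0:ℝ) => ENNReal.ofReal (rho μ σ r.1))
      ((rho_measurable μ σ).comp measurable_subtype_coe).ennreal_ofReal]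
  calc ∫⁻ x : Ioi (0:ℝ), ENNReal.ofReal (x.1 ^ 2) * ENNReal.ofReal (rho μ σ x.1)
        ∂(Measure.comap Subtype.val volume)
      = ∫⁻ x in Ioi (0:ℝ),
          ENNReal.ofReal (x ^ 2) * ENNReal.ofReal (rho μ σ x) := by
        rw [lintegral_subtype_comap measurableSet_Ioi
          (fun y : ℝ => ENNReal.ofReal (y ^ 2) * ENNReal.ofReal (rho μ σ y))]
    _ = ∫⁻ x in Ioi (0:ℝ), ENNReal.ofReal (x ^ 2 * rho μ σ x) := by
        refine setLIntegral_congr_fun measurableSet_Ioi ?_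
        intro x hx
        dsimp only
        rw [ENNReal.ofReal_mul (by positivity)]
    _ = ENNReal.ofReal (4 * π)⁻¹ := by
        rw [← ofReal_integral_eq_lintegral_ofReal (radial_integrableOn μ σ hσ) ?_,
          radial_integral μ σ hσ]
        filter_upwards [ae_restrict_mem measurableSet_Ioi] with x hx
        exact mul_nonneg (by positivity) (rho_nonneg μ σ hσ hx)

lemma toSphere_univ_eq :
    (volume : Measure (EuclideanSpace ℝ (Fin 3))).toSphere Set.univ = ENNReal.ofReal (4 * π) := by
  rw [Measure.toSphere_apply_univ, EuclideanSpace.volume_ball]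
  have hcard : Fintype.card (Fin 3) = 3 := by simp
  rw [hcard, finrank_euclideanSpace_fin]
  have hπ : (0:ℝ) < π := pi_pos
  have hsπ : (0:ℝ) < √π := Real.sqrt_pos.mpr hπ
  have hg : Real.Gamma ((3:ℝ) / 2 + 1) = 3 / 4 * √π := by
    rw [Real.Gamma_add_one (by norm_num)]
    have h32 : (3:ℝ)/2 = 1/2 + 1 := by norm_num
    rw [h32, Real.Gamma_add_one (by norm_num), Real.Gamma_one_half_eq]
    ring
  have h1 : √π ^ 3 / Real.Gamma ((3:ℝ)/2 + 1) = 4 / 3 * π := by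
    rw [hg]
    have hss : (√π) ^ 3 = π * √π := by
      rw [pow_succ, sq_sqrt hπ.le]
    rw [hss]
    field_simp
  rw [show (((3:ℕ):ℝ) / 2 + 1) = (3:ℝ)/2 + 1 from by norm_num]
  rw [ENNReal.ofReal_one, one_pow, one_mul, h1,
    show ((3:ℕ) : ENNReal) = ENNReal.ofReal 3 from by simp,
    ← ENNReal.ofReal_mul (by norm_num)]
  norm_num
  rw [← ENNReal.ofReal_mul (by norm_num), ← ENNReal.ofReal_ofNat 3, ← ENNReal.ofReal_mul (by norm_num),
    ← ENNReal.ofReal_ofNat 4, ← ENNReal.ofReal_mul (by norm_num)]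
  congr 1; ring

end SLNaux
end Aux

open SLNaux Set Metric
open scoped ENNReal


/-- The pushforward of the Spherical Log-Normal distribution under `x ↦ x/‖x‖`
is the uniform probability measure on the unit sphere of ℝ³ (here both sides
are regarded as measures on ℝ³, the right hand side being supported on the
sphere). -/
theorem map_normalize_sphericalLogNormal_eq_uniformSphere (μ σ : ℝ) (hσ : 0 < σ) :
    Measure.map (fun x : EuclideanSpace ℝ (Fin 3) => ‖x‖⁻¹ • x)
        (volume.withDensity fun x => ENNReal.ofReal (sphericalLogNormalDensity μ σ x)) =
      Measure.map (Subtype.val) uniformSphereMeasure := by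
  classical
  set E := EuclideanSpace ℝ (Fin 3) with hE
  set f : E → ℝ≥0∞ := fun x => ENNReal.ofReal (sphericalLogNormalDensity μ σ x) with hf
  set P : Measure E := volume.withDensity f with hP
  have hmeas0 : MeasurableSet ({0}ᶜ : Set E) := (measurableSet_singleton 0).compl
  have hfd : sphericalLogNormalDensity μ σ = fun x : E => if x = 0 then 0 else rho μ σ ‖x‖ := rfl
  have hfmeas : Measurable f := by
    rw [hf, hfd]
    exact (Measurable.ite (MeasurableSet.singleton 0) measurable_const
      ((rho_measurable μ σ).comp measurable_norm)).ennreal_ofReal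
  set Φ := (homeomorphUnitSphereProd E).toMeasurableEquiv with hΦ
  set G : sphere (0 : E) 1 × Ioi (0:ℝ) → ℝ≥0∞ :=
    fun p => ENNReal.ofReal (rho μ σ p.2.1) with hG
  have hGmeas : Measurable G :=
    ((rho_measurable μ σ).comp (measurable_subtype_coe.comp measurable_snd)).ennreal_ofReal
  have hcomap : P.comap Subtype.val =
      ((volume : Measure E).comap (Subtype.val : ({0}ᶜ : Set E) → E)).withDensity (G ∘ Φ) := by
    ext s hs
    rw [comap_subtype_coe_apply hmeas0 P s, hP,
      withDensity_apply _ ((MeasurableEmbedding.subtype_coe hmeas0).measurableSet_image.2 hs),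
      ← setLIntegral_subtype hmeas0 s f, withDensity_apply _ hs]
    refine setLIntegral_congr_fun hs ?_
    intro x _
    have hx0 : (x : E) ≠ 0 := x.2
    show ENNReal.ofReal (sphericalLogNormalDensity μ σ x.1) = G (Φ x)
    rw [hfd]
    simp only [hx0, if_false, ite_false, hG, hΦ, Homeomorph.toMeasurableEquiv_coe]
    rw [homeomorphUnitSphereProd_apply_snd_coe]
  have hdim : Module.finrank ℝ E - 1 = 2 := by
    rw [finrank_euclideanSpace_fin]
  have hmapΦ : Measure.map Φ (P.comap Subtype.val) =
      (((volume : Measure E).toSphere).prod (Measure.volumeIoiPow 2)).withDensity G := by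
    rw [hcomap, map_withDensity_equiv Φ _ G hGmeas]
    congr 1
    have hmp := (volume : Measure E).measurePreserving_homeomorphUnitSphereProd
    rw [hdim] at hmp
    rw [hΦ]
    exact hmp.map_eq
  have hP0 : P {0} = 0 :=
    withDensity_absolutelyContinuous volume f (measure_singleton 0)
  have hmapval : Measure.map (Subtype.val : ({0}ᶜ : Set E) → E) (P.comap Subtype.val) = P := by
    rw [map_comap_subtype_coe hmeas0]
    exact Measure.restrict_eq_self_of_ae_mem (compl_mem_ae_iff.mpr hP0)
  have hh : Measurable (fun x : E => ‖x‖⁻¹ • x) :=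
    (measurable_norm.inv).smul measurable_id
  have hcomp1 : (fun x : E => ‖x‖⁻¹ • x) ∘ (Subtype.val : ({0}ᶜ : Set E) → E) =
      ((Subtype.val : sphere (0:E) 1 → E) ∘ Prod.fst) ∘ Φ := by
    funext x
    show ‖(x:E)‖⁻¹ • (x:E) = ((Φ x).1 : E)
    rw [hΦ, Homeomorph.toMeasurableEquiv_coe, homeomorphUnitSphereProd_apply_fst_coe]
  calc Measure.map (fun x : E => ‖x‖⁻¹ • x) P
      = Measure.map (fun x : E => ‖x‖⁻¹ • x)
          (Measure.map (Subtype.val : ({0}ᶜ : Set E) → E) (P.comap Subtype.val)) := by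
        rw [hmapval]
    _ = Measure.map ((fun x : E => ‖x‖⁻¹ • x) ∘ (Subtype.val : ({0}ᶜ : Set E) → E))
          (P.comap Subtype.val) := Measure.map_map hh measurable_subtype_coe
    _ = Measure.map (((Subtype.val : sphere (0:E) 1 → E) ∘ Prod.fst) ∘ Φ)
          (P.comap Subtype.val) := by rw [hcomp1]
    _ = Measure.map ((Subtype.val : sphere (0:E) 1 → E) ∘ Prod.fst)
          (Measure.map Φ (P.comap Subtype.val)) :=
        (Measure.map_map (measurable_subtype_coe.comp measurable_fst) Φ.measurable).symm
    _ = Measure.map (Subtype.val : sphere (0:E) 1 → E)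
          (Measure.map Prod.fst (Measure.map Φ (P.comap Subtype.val))) :=
        (Measure.map_map measurable_subtype_coe measurable_fst).symm
    _ = Measure.map (Subtype.val : sphere (0:E) 1 → E)
          (ENNReal.ofReal (4 * π)⁻¹ • (volume : Measure E).toSphere) := by
        rw [hmapΦ,
          map_fst_withDensity_snd ((volume : Measure E).toSphere) (Measure.volumeIoiPow 2)
            (fun r : Ioi (0:ℝ) => ENNReal.ofReal (rho μ σ r.1))
            (((rho_measurable μ σ).comp measurable_subtype_coe).ennreal_ofReal),
          lint_c μ σ hσ]
    _ = Measure.map (Subtype.val) uniformSphereMeasure := by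
        rw [uniformSphereMeasure, Measure.map_smul, Measure.map_smul, toSphere_univ_eq,
          ENNReal.ofReal_inv_of_pos (by positivity)]
end
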